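/- Let R be a commutative ring with identity and G any group. The group ring RG is reversible if and only if RG has the SI property. -/

import Mathlib

lemma trace_comm {R G : Type*} [CommRing R] [Group G] (x y : MonoidAlgebra R G) :
    (x * y).coeff 1 = (y * x).coeff 1 := by
  induction x using MonoidAlgebra.induction with
  | zero => simp
  | single_add g c f _ _ ih =>
      rw [add_mul, mul_add, MonoidAlgebra.coeff_add, MonoidAlgebra.coeff_add, Finsupp.add_apply, Finsupp.add_apply, ih]
      congr 1
      rw [MonoidAlgebra.coeff_single_mul_apply, MonoidAlgebra.coeff_mul_single_apply]
      simp [mul_comm]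

theorem stmt_9 (R G : Type*) [CommRing R] [Group G] :
    (∀ a b : MonoidAlgebra R G, a * b = 0 → b * a = 0) ↔
    (∀ a b : MonoidAlgebra R G, a * b = 0 → ∀ r : MonoidAlgebra R G, a * r * b = 0) := by
  constructor
  · intro rev a b hab r
    have hba : b * a = 0 := rev a b hab
    induction r using MonoidAlgebra.induction with
    | zero => simp
    | single_add g c f _ _ ih =>
        rw [mul_add, add_mul, ih, add_zero]
        have h1 : (MonoidAlgebra.single g c * b) * a = 0 := by
          rw [mul_assoc, hba, mul_zero]
        have h2 := rev _ _ h1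
        rw [← mul_assoc] at h2
        exact h2
  · intro si a b hab
    have hba : ∀ g : G, (b * a).coeff g = 0 := by
      intro g
      calc (b * a).coeff g = (MonoidAlgebra.single g⁻¹ (1 : R) * (b * a)).coeff 1 := by
            rw [MonoidAlgebra.coeff_single_mul_apply]; simp
        _ = ((MonoidAlgebra.single g⁻¹ (1 : R) * b) * a).coeff 1 := by rw [mul_assoc]
        _ = (a * (MonoidAlgebra.single g⁻¹ (1 : R) * b)).coeff 1 :=
            trace_comm _ _
        _ = 0 := by
            rw [← mul_assoc, si a b hab, MonoidAlgebra.coeff_zero, Finsupp.zero_apply]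
    ext g
    simp [hba g]
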